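/- Let M be a Noetherian module over a commutative ring A and T an A-linear endomorphism of M. If the endomorphism induced by T on M/ker(T^n) is surjective for some n, then for all sufficiently large m, M = ker(T^m) ⊕ im(T^m) and the restriction of T to im(T^m) is an automorphism. -/

import Mathlib

theorem stmt_7 (A : Type*) [CommRing A] (M : Type*) [AddCommGroup M] [Module A M]
    [IsNoetherian A M] (T : M →ₗ[A] M) (n : ℕ)
    (hsurj : Function.Surjective
      ((LinearMap.ker (T ^ n)).mapQ (LinearMap.ker (T ^ n)) T
        (fun x hx => by
          simp only [Submodule.mem_comap, LinearMap.mem_ker] at hx ⊢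
          have : (T ^ n * T) x = 0 := by
            rw [← pow_succ, pow_succ', Module.End.mul_apply, hx, map_zero]
          simpa [Module.End.mul_apply] using this))) :
    ∃ m₀ : ℕ, ∀ m ≥ m₀,
      IsCompl (LinearMap.ker (T ^ m)) (LinearMap.range (T ^ m)) ∧
      Set.BijOn T (LinearMap.range (T ^ m) : Set M) (LinearMap.range (T ^ m) : Set M) := by
  -- Basic surjectivity: every x is T y + (element of ker T^n)
  have hstep : ∀ x : M, ∃ y : M, x - T y ∈ LinearMap.ker (T ^ n) := by
    intro x
    obtain ⟨y, hy⟩ := hsurj (Submodule.Quotient.mk x)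
    obtain ⟨y, rfl⟩ := Submodule.Quotient.mk_surjective _ y
    rw [Submodule.mapQ_apply, Submodule.Quotient.eq'] at hy
    exact ⟨y, by simpa [neg_add_eq_sub] using hy⟩
  -- Iterate: every x is T^k y + (element of ker T^(n+k))
  have hiter : ∀ k : ℕ, ∀ x : M, ∃ y : M, x - (T ^ k) y ∈ LinearMap.ker (T ^ (n + k)) := by
    intro k
    induction k with
    | zero => exact fun x => ⟨x, by simp⟩
    | succ k ih =>
      intro x
      obtain ⟨y, hy⟩ := hstep x
      obtain ⟨z, hz⟩ := ih y
      refine ⟨z, ?_⟩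
      have key : x - (T ^ (k + 1)) z = T (y - (T ^ k) z) + (x - T y) := by
        rw [pow_succ']
        simp only [Module.End.mul_apply, map_sub]
        abel
      rw [LinearMap.mem_ker, key, map_add]
      have hz' : (T ^ (n + k + 1)) (y - (T ^ k) z) = 0 :=
        Module.End.pow_map_zero_of_le (Nat.le_succ _) hz
      have h1 : (T ^ (n + (k + 1))) (T (y - (T ^ k) z)) = 0 := by
        have e := pow_mul_comm' T (n + k + 1)
        calc (T ^ (n + (k + 1))) (T (y - (T ^ k) z))
            = (T ^ (n + k + 1) * T) (y - (T ^ k) z) := rfl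
          _ = (T * T ^ (n + k + 1)) (y - (T ^ k) z) := by rw [e]
          _ = T ((T ^ (n + k + 1)) (y - (T ^ k) z)) := rfl
          _ = 0 := by rw [hz', map_zero]
      have h2 : (T ^ (n + (k + 1))) (x - T y) = 0 :=
        Module.End.pow_map_zero_of_le (Nat.le_add_right n (k + 1)) hy
      rw [h1, h2, add_zero]
  obtain ⟨m₁, hm₁⟩ := Filter.eventually_atTop.mp (Module.End.eventually_disjoint_ker_pow_range_pow T)
  obtain ⟨m₂, hm₂⟩ := Filter.eventually_atTop.mp T.eventually_iSup_ker_pow_eq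
  refine ⟨max (max m₁ m₂) 1, fun m hm => ?_⟩
  have hm1 : m₁ ≤ m := le_trans (le_max_left _ _) (le_trans (le_max_left _ _) hm)
  have hm2 : m₂ ≤ m := le_trans (le_max_right _ _) (le_trans (le_max_left _ _) hm)
  have hmpos : 1 ≤ m := le_trans (le_max_right _ _) hm
  have hkerstab : ∀ k : ℕ, LinearMap.ker (T ^ k) ≤ LinearMap.ker (T ^ m) := by
    intro k
    rw [← hm₂ m hm2]
    exact le_iSup (fun i => LinearMap.ker (T ^ i)) k
  -- codisjoint
  have hcod : Codisjoint (LinearMap.ker (T ^ m)) (LinearMap.range (T ^ m)) := by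
    rw [codisjoint_iff, eq_top_iff]
    intro x _
    obtain ⟨y, hy⟩ := hiter m x
    have hx : x = (x - (T ^ m) y) + (T ^ m) y := by abel
    rw [hx]
    exact Submodule.add_mem_sup (hkerstab (n + m) hy) ⟨y, rfl⟩
  have hdisj := hm₁ m hm1
  refine ⟨⟨hdisj, hcod⟩, ?_, ?_, ?_⟩
  · -- maps to
    rintro x ⟨y, rfl⟩
    exact ⟨T y, by simpa [Module.End.mul_apply] using LinearMap.congr_fun (pow_mul_comm' T m) y⟩
  · -- injective on
    rintro x hx y hy hxy
    have hk : x - y ∈ LinearMap.ker (T ^ m) := by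
      apply hkerstab 1
      simp [LinearMap.mem_ker, map_sub, hxy]
    have hr : x - y ∈ LinearMap.range (T ^ m) := Submodule.sub_mem _ hx hy
    have := hdisj.le_bot ⟨hk, hr⟩
    simpa [sub_eq_zero] using this
  · -- surjective onto
    rintro x ⟨w, rfl⟩
    obtain ⟨y, hy⟩ := hiter m w
    have hy' : w - (T ^ m) y ∈ LinearMap.ker (T ^ m) := hkerstab (n + m) hy
    have hx : (T ^ m) w = (T ^ m) ((T ^ m) y) := by
      have h := hy'
      rw [LinearMap.mem_ker, map_sub, sub_eq_zero] at h
      exact h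
    obtain ⟨m', rfl⟩ := Nat.exists_eq_add_of_le hmpos
    refine ⟨(T ^ (1 + m' + m')) y, ⟨(T ^ m') y, ?_⟩, ?_⟩
    · rw [← Module.End.mul_apply, ← pow_add]
    · have e : T * T ^ (1 + m' + m') = T ^ (1 + m') * T ^ (1 + m') := by
        rw [← pow_succ', ← pow_add]
        congr 1
        ring
      calc T ((T ^ (1 + m' + m')) y)
          = (T * T ^ (1 + m' + m')) y := rfl
        _ = (T ^ (1 + m') * T ^ (1 + m')) y := by rw [e]
        _ = (T ^ (1 + m')) ((T ^ (1 + m')) y) := rfl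
        _ = (T ^ (1 + m')) w := hx.symm
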